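/- Let 1 ≤ k ≤ n, let Y ⊆ [n] with |Y| = k, and let j_1, …, j_s be integers with 0 ≤ j_i ≤ k and j_1 + … + j_s = k + 1. Define G_i = {G ⊆ [n] : |G ∩ Y| ≥ j_i}. Then (a) the families G_1, …, G_s are cross-dependent, (b) ρ_n(G_i) = (k + 1 − j_i)/(k + 1) for each i, and (c) Σ_{i=1}^{s} ρ_n(G_i) = s − 1. -/

import Mathlib

open Finset

/-- The binomial norm of a family `F` of subsets of `[n]`:
`‖F‖ₙ = ∑_{A ∈ F} 1 / C(n, |A|)`. -/
noncomputable def binNorm (n : ℕ) (F : Finset (Finset ℕ)) : ℝ :=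
  ∑ A ∈ F, 1 / (n.choose A.card : ℝ)

/-- The relative measure `ρₙ(F) = ‖F‖ₙ / (n + 1)`. -/
noncomputable def rho (n : ℕ) (F : Finset (Finset ℕ)) : ℝ :=
  binNorm n F / ((n : ℝ) + 1)

/-- Families `F 1, …, F s` are cross-dependent if one cannot pick `f i ∈ F i`
with the `f i` pairwise disjoint. -/
def CrossDep {s : ℕ} (F : Fin s → Finset (Finset ℕ)) : Prop :=
  ¬ ∃ f : Fin s → Finset ℕ, (∀ i, f i ∈ F i) ∧
      Pairwise fun i j => Disjoint (f i) (f j)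

lemma sumCC' (n : ℕ) : ∀ b d : ℕ,
    ∑ a ∈ range (n+1), a.choose b * (n-a).choose d = (n+1).choose (b+d+1) := by
  induction n with
  | zero =>
    intro b d
    rcases b with _ | b
    · rcases d with _ | d
      · simp
      · simp [Nat.choose_eq_zero_of_lt (by omega : 1 < d + 2)]
    · simp [Nat.choose_eq_zero_of_lt (by omega : 0 < b + 1),
        Nat.choose_eq_zero_of_lt (by omega : 1 < b + 1 + d + 1)]
  | succ n IH =>
    intro b d
    rcases d with _ | d
    · simp only [Nat.choose_zero_right, mul_one, Nat.add_zero]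
      rw [← Nat.sum_Icc_choose (n+1) b]
      rcases le_or_gt b (n+1) with hb | hb
      · refine (Finset.sum_subset (fun x hx => ?_) (fun x hx hx' => ?_)).symm
        · simp only [mem_Icc] at hx; simp only [mem_range]; omega
        · simp only [mem_range] at hx
          simp only [mem_Icc, not_and, not_le] at hx'
          have hxb : x < b := by
            rcases Nat.lt_or_ge x b with h | h
            · exact h
            · exact absurd (hx' h) (by omega)
          exact Nat.choose_eq_zero_of_lt hxb
      · rw [Finset.Icc_eq_empty (by omega), Finset.sum_empty]
        refine Finset.sum_eq_zero ?_
        intro x hx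
        simp only [mem_range] at hx
        exact Nat.choose_eq_zero_of_lt (by omega)
    · rw [Finset.sum_range_succ]
      have h0 : (n + 1 - (n+1)).choose (d+1) = 0 := by simp
      rw [h0, mul_zero, add_zero]
      have step : ∑ a ∈ range (n+1), a.choose b * (n+1-a).choose (d+1)
          = ∑ a ∈ range (n+1), (a.choose b * (n-a).choose d
              + a.choose b * (n-a).choose (d+1)) := by
        refine Finset.sum_congr rfl fun a ha => ?_
        simp only [mem_range] at ha
        have : n + 1 - a = (n - a) + 1 := by omega
        rw [this, Nat.choose_succ_succ, Nat.mul_add]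
      rw [step, Finset.sum_add_distrib, IH b d, IH b (d+1)]
      have hbd : b + (d+1) + 1 = (b + d + 1) + 1 := by omega
      rw [hbd]
      exact (Nat.choose_succ_succ (n+1) (b+d+1)).symm

lemma quad' (b c d e : ℕ) :
    ((b+d).choose b : ℝ) * ((c+e).choose c) * ((b+c+d+e).choose (b+d)) =
    ((b+c).choose b) * ((d+e).choose d) * ((b+c+d+e).choose (b+c)) := by
  have h1 : (b:ℕ) ≤ b + d := Nat.le_add_right _ _
  have h2 : (c:ℕ) ≤ c + e := Nat.le_add_right _ _
  have h3 : b + d ≤ b + c + d + e := by omega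
  have h4 : (b:ℕ) ≤ b + c := Nat.le_add_right _ _
  have h5 : (d:ℕ) ≤ d + e := Nat.le_add_right _ _
  have h6 : b + c ≤ b + c + d + e := by omega
  rw [Nat.cast_choose ℝ h1, Nat.cast_choose ℝ h2, Nat.cast_choose ℝ h3,
    Nat.cast_choose ℝ h4, Nat.cast_choose ℝ h5, Nat.cast_choose ℝ h6]
  have e1 : b + d - b = d := by omega
  have e2 : c + e - c = e := by omega
  have e3 : b + c + d + e - (b + d) = c + e := by omega
  have e4 : b + c - b = c := by omega
  have e5 : d + e - d = e := by omega
  have e6 : b + c + d + e - (b + c) = d + e := by omega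
  rw [e1, e2, e3, e4, e5, e6]
  have nz : ∀ m : ℕ, ((Nat.factorial m : ℝ)) ≠ 0 :=
    fun m => Nat.cast_ne_zero.2 (Nat.factorial_ne_zero m)
  field_simp

lemma key' (n k b : ℕ) (hb : b ≤ k) (hk : k ≤ n) :
    ∑ c ∈ range (n-k+1), ((n-k).choose c : ℝ) / (n.choose (b+c))
      = ((n:ℝ)+1) / (((k:ℝ)+1) * (k.choose b)) := by
  have hkb : (k.choose b : ℝ) ≠ 0 :=
    Nat.cast_ne_zero.2 (Nat.choose_pos hb).ne'
  have hnk : (n.choose k : ℝ) ≠ 0 :=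
    Nat.cast_ne_zero.2 (Nat.choose_pos hk).ne'
  have hterm : ∀ c ∈ range (n-k+1),
      ((n-k).choose c : ℝ) / (n.choose (b+c))
        = ((b+c).choose b * ((n-(b+c)).choose (k-b)) : ℝ) / (k.choose b * n.choose k) := by
    intro c hc
    simp only [mem_range] at hc
    have hc' : c ≤ n - k := by omega
    have hq := quad' b c (k-b) (n-k-c)
    have e1 : b + (k-b) = k := by omega
    have e2 : c + (n-k-c) = n - k := by omega
    have e3 : b + c + (k-b) + (n-k-c) = n := by omega
    have e4 : (k-b) + (n-k-c) = n - (b+c) := by omega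
    rw [e1, e2, e3, e4] at hq
    have hbc : (n.choose (b+c) : ℝ) ≠ 0 :=
      Nat.cast_ne_zero.2 (Nat.choose_pos (by omega)).ne'
    field_simp
    linarith [hq]
  rw [Finset.sum_congr rfl hterm, ← Finset.sum_div]
  have hnum : ∑ c ∈ range (n-k+1), ((b+c).choose b * ((n-(b+c)).choose (k-b)) : ℝ)
      = ((n+1).choose (k+1) : ℝ) := by
    have hN : ∑ c ∈ range (n-k+1), (b+c).choose b * (n-(b+c)).choose (k-b)
        = (n+1).choose (k+1) := by
      have h1 : ∑ a ∈ range (n+1), a.choose b * (n-a).choose (k-b)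
          = (n+1).choose (k+1) := by
        rw [sumCC' n b (k-b)]
        congr 1
        omega
      rw [← h1]
      have hstep : ∑ c ∈ range (n-k+1), (b+c).choose b * (n-(b+c)).choose (k-b)
            = ∑ a ∈ Ico b (b + (n-k+1)), a.choose b * (n-a).choose (k-b) := by
        rw [Finset.sum_Ico_eq_sum_range]
        refine Finset.sum_congr (by congr 1; omega) fun c hc => rfl
      rw [hstep]
      have hsub : Ico b (b + (n-k+1)) ⊆ range (n+1) := by
        intro x hx
        simp only [mem_Ico] at hx
        simp only [mem_range]
        omega
      refine Finset.sum_subset hsub fun x hx hx' => ?_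
      · simp only [mem_range] at hx
        simp only [mem_Ico, not_and, not_lt] at hx'
        rcases Nat.lt_or_ge x b with h | h
        · rw [Nat.choose_eq_zero_of_lt h, Nat.zero_mul]
        · have : b + (n-k+1) ≤ x := hx' h
          rw [Nat.choose_eq_zero_of_lt (show n - x < k - b by omega), Nat.mul_zero]
    push_cast [← hN]
    rfl
  rw [hnum]
  have hmul' : (((n+1).choose (k+1) : ℕ) : ℝ) * ((k:ℝ)+1) = ((n:ℝ)+1) * (n.choose k) := by
    exact_mod_cast (Nat.add_one_mul_choose_eq n k).symm
  have hk1 : ((k:ℝ)+1) ≠ 0 := by positivity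
  field_simp
  linear_combination hmul'

lemma binNorm_calc (n k jv : ℕ) (hkn : k ≤ n)
    (Y : Finset ℕ) (hY : Y ⊆ Finset.range n) (hYcard : Y.card = k) (hjv : jv ≤ k) :
    binNorm n ((Finset.range n).powerset.filter fun A => jv ≤ (A ∩ Y).card)
      = ((k:ℝ) + 1 - jv) * ((n:ℝ)+1) / ((k:ℝ)+1) := by
  classical
  set Z : Finset ℕ := Finset.range n \ Y with hZ
  have hZcard : Z.card = n - k := by
    rw [hZ, card_sdiff_of_subset hY, card_range, hYcard]
  have hCY : ∀ C : Finset ℕ, C ⊆ Z → ∀ a ∈ C, a ∉ Y := by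
    intro C hC a ha
    have := hC ha
    rw [hZ, mem_sdiff] at this
    exact this.2
  rw [binNorm, Finset.sum_filter]
  have hbij : ∑ A ∈ (Finset.range n).powerset,
        (if jv ≤ (A ∩ Y).card then 1 / (n.choose A.card : ℝ) else 0)
      = ∑ p ∈ Y.powerset ×ˢ Z.powerset,
        (if jv ≤ p.1.card then 1 / (n.choose (p.1.card + p.2.card) : ℝ) else 0) := by
    refine Finset.sum_nbij' (fun A => (A ∩ Y, A \ Y)) (fun p => p.1 ∪ p.2) ?_ ?_ ?_ ?_ ?_
    · intro A hA
      simp only [mem_powerset] at hA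
      simp only [mem_product, mem_powerset]
      exact ⟨inter_subset_right, sdiff_subset_sdiff hA (le_refl Y)⟩
    · intro p hp
      simp only [mem_product, mem_powerset] at hp
      simp only [mem_powerset]
      exact union_subset (hp.1.trans hY) (hp.2.trans sdiff_subset)
    · intro A hA
      ext a
      simp only [mem_union, mem_inter, mem_sdiff]
      tauto
    · intro p hp
      simp only [mem_product, mem_powerset] at hp
      obtain ⟨hB, hC⟩ := hp
      have hCY' := hCY p.2 hC
      refine Prod.ext ?_ ?_
      · show (p.1 ∪ p.2) ∩ Y = p.1
        ext a
        simp only [mem_inter, mem_union]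
        constructor
        · rintro ⟨h | h, hy⟩
          · exact h
          · exact absurd hy (hCY' a h)
        · intro h
          exact ⟨Or.inl h, hB h⟩
      · show (p.1 ∪ p.2) \ Y = p.2
        ext a
        simp only [mem_sdiff, mem_union]
        constructor
        · rintro ⟨h | h, hy⟩
          · exact absurd (hB h) hy
          · exact h
        · intro h
          exact ⟨Or.inr h, hCY' a h⟩
    · intro A hA
      have hcard : (A ∩ Y).card + (A \ Y).card = A.card :=
        Finset.card_inter_add_card_sdiff A Y
      rw [hcard]
  rw [hbij, Finset.sum_product]
  have hinner : ∀ B ∈ Y.powerset,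
      ∑ C ∈ Z.powerset, (if jv ≤ B.card then 1 / (n.choose (B.card + C.card) : ℝ) else 0)
        = if jv ≤ B.card then ((n:ℝ)+1) / (((k:ℝ)+1) * (k.choose B.card)) else 0 := by
    intro B hB
    simp only [mem_powerset] at hB
    have hBk : B.card ≤ k := hYcard ▸ Finset.card_le_card hB
    split_ifs with h
    · -- compute the inner sum
      rw [Finset.sum_powerset, ← key' n k B.card hBk hkn]
      rw [hZcard]
      refine Finset.sum_congr rfl fun c hc => ?_
      have : ∀ C ∈ Finset.powersetCard c Z, 1 / (n.choose (B.card + C.card) : ℝ)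
          = 1 / (n.choose (B.card + c) : ℝ) := by
        intro C hC
        rw [(Finset.mem_powersetCard.1 hC).2]
      rw [Finset.sum_congr rfl this, Finset.sum_const, Finset.card_powersetCard, hZcard,
        nsmul_eq_mul]
      rw [mul_one_div]
    · exact Finset.sum_const_zero
  rw [Finset.sum_congr rfl hinner]
  -- outer sum
  rw [Finset.sum_powerset]
  have houter : ∀ b ∈ range (Y.card + 1),
      ∑ B ∈ Finset.powersetCard b Y,
        (if jv ≤ B.card then ((n:ℝ)+1) / (((k:ℝ)+1) * (k.choose B.card)) else 0)
      = if jv ≤ b then ((n:ℝ)+1) / ((k:ℝ)+1) else 0 := by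
    intro b hb
    simp only [mem_range, hYcard] at hb
    have hbk : b ≤ k := by omega
    have hrw : ∀ B ∈ Finset.powersetCard b Y,
        (if jv ≤ B.card then ((n:ℝ)+1) / (((k:ℝ)+1) * (k.choose B.card)) else 0)
        = if jv ≤ b then ((n:ℝ)+1) / (((k:ℝ)+1) * (k.choose b)) else 0 := by
      intro B hB
      rw [(Finset.mem_powersetCard.1 hB).2]
    rw [Finset.sum_congr rfl hrw, Finset.sum_const, Finset.card_powersetCard, hYcard,
      nsmul_eq_mul]
    have hkb : (k.choose b : ℝ) ≠ 0 := Nat.cast_ne_zero.2 (Nat.choose_pos hbk).ne'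
    have hk1 : ((k:ℝ)+1) ≠ 0 := by positivity
    split_ifs with h
    · field_simp
    · rw [mul_zero]
  rw [Finset.sum_congr rfl houter, hYcard]
  -- count
  have hfilter : ∑ b ∈ range (k+1), (if jv ≤ b then ((n:ℝ)+1) / ((k:ℝ)+1) else 0)
      = ((k+1-jv : ℕ) : ℝ) * (((n:ℝ)+1) / ((k:ℝ)+1)) := by
    rw [← Finset.sum_filter]
    rw [Finset.sum_const, nsmul_eq_mul]
    congr 2
    have : Finset.filter (fun b => jv ≤ b) (range (k+1)) = Ico jv (k+1) := by
      ext x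
      simp only [mem_filter, mem_range, mem_Ico]
      omega
    rw [this, Nat.card_Ico]
  rw [hfilter]
  have : ((k+1-jv : ℕ) : ℝ) = (k:ℝ) + 1 - jv := by
    push_cast [Nat.cast_sub (by omega : jv ≤ k + 1)]
    ring
  rw [this]
  ring

theorem stmt_4 (n k s : ℕ) (hk1 : 1 ≤ k) (hkn : k ≤ n)
    (Y : Finset ℕ) (hY : Y ⊆ Finset.range n) (hYcard : Y.card = k)
    (j : Fin s → ℕ) (hj : ∀ i, j i ≤ k) (hjsum : ∑ i, j i = k + 1)
    (G : Fin s → Finset (Finset ℕ))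
    (hG : ∀ i, G i = (Finset.range n).powerset.filter
        fun A => j i ≤ (A ∩ Y).card) :
    CrossDep G ∧
    (∀ i, rho n (G i) = ((k : ℝ) + 1 - (j i : ℝ)) / ((k : ℝ) + 1)) ∧
    ∑ i, rho n (G i) = (s : ℝ) - 1 := by
  have hn1 : ((n:ℝ)+1) ≠ 0 := by positivity
  have hk1' : ((k:ℝ)+1) ≠ 0 := by positivity
  have hrho : ∀ i, rho n (G i) = ((k : ℝ) + 1 - (j i : ℝ)) / ((k : ℝ) + 1) := by
    intro i
    rw [rho, hG i, binNorm_calc n k (j i) hkn Y hY hYcard (hj i)]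
    field_simp
  refine ⟨?_, hrho, ?_⟩
  · rintro ⟨f, hf, hdisj⟩
    have hmem : ∀ i, j i ≤ (f i ∩ Y).card := fun i => by
      have h := hf i
      rw [hG i, Finset.mem_filter] at h
      exact h.2
    have hcard : ∑ i, (f i ∩ Y).card ≤ Y.card := by
      rw [← Finset.card_biUnion (fun i _ i' _ h =>
        (hdisj h).mono inter_subset_left inter_subset_left)]
      refine Finset.card_le_card ?_
      intro a ha
      simp only [Finset.mem_biUnion] at ha
      obtain ⟨i, _, hi⟩ := ha
      exact (Finset.mem_inter.1 hi).2
    have hcontra : k + 1 ≤ k := by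
      calc k + 1 = ∑ i, j i := hjsum.symm
        _ ≤ ∑ i, (f i ∩ Y).card := Finset.sum_le_sum fun i _ => hmem i
        _ ≤ Y.card := hcard
        _ = k := hYcard
    omega
  · have hsumj : ∑ i, ((j i : ℝ)) = (k:ℝ) + 1 := by
      have h := congrArg (Nat.cast (R := ℝ)) hjsum
      push_cast at h
      exact h
    calc ∑ i, rho n (G i)
        = ∑ i, ((k:ℝ)+1-(j i))/((k:ℝ)+1) := Finset.sum_congr rfl fun i _ => hrho i
      _ = (∑ i, ((k:ℝ)+1-(j i)))/((k:ℝ)+1) := (Finset.sum_div _ _ _).symm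
      _ = ((s:ℝ)*((k:ℝ)+1) - ((k:ℝ)+1))/((k:ℝ)+1) := by
          rw [Finset.sum_sub_distrib, Finset.sum_const, Finset.card_univ, Fintype.card_fin,
            hsumj, nsmul_eq_mul]
      _ = (s:ℝ) - 1 := by
          field_simp
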